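/- Let S be an ICA structure with nodes u1,...,un, and suppose the formulas node^S_{u_i}(w) used in γ̂_c(S) are arbitrary formulas with free variable w satisfying the mutual-exclusivity property (each node of any embedded 2-valued structure satisfies at most one node formula). Then for every 2-valued structure S♮ with S♮ ⊨ γ̂_c(S), the structure S is the canonical abstraction of S♮. -/

import Mathlib

/-!
Common framework: 2-valued and 3-valued logical structures over a relational
vocabulary with a designated binary equality predicate, embedding, first-order
formulas with transitive closure and their Tarskian semantics, characteristic
formulas, canonical abstraction.
-/

namespace HeapAbs

/-- The three truth values 0, 1/2, 1. -/
inductive TV : Type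
  | zero
  | half
  | one
  deriving DecidableEq

/-- Information order on truth values: `l1 ⊑ l2` iff `l1 = l2` or `l2 = 1/2`. -/
def TV.le (a b : TV) : Prop := a = b ∨ b = TV.half

/-- `v` is the least upper bound (join) of the set `A` in the information order. -/
def TV.IsJoin (A : Set TV) (v : TV) : Prop :=
  (∀ a ∈ A, TV.le a v) ∧ ∀ w, (∀ a ∈ A, TV.le a w) → TV.le v w

/-- A (relational) vocabulary: a set of predicate symbols with arities and a
designated binary equality symbol. -/
structure Voc : Type 1 where
  rel : Type
  ar : rel → ℕ
  eqr : rel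
  eq_ar : ar eqr = 2

/-- The pair `(u, v)` as a tuple (used for binary predicates). -/
def pair {α : Type _} {n : ℕ} (u v : α) : Fin n → α :=
  fun i => if (i : ℕ) = 0 then u else v

/-- A 3-valued logical structure over the vocabulary `σ`. -/
structure Str3 (σ : Voc) : Type 1 where
  U : Type
  ι : (r : σ.rel) → (Fin (σ.ar r) → U) → TV
  eq_refl : ∀ u : U, ι σ.eqr (pair u u) ≠ TV.zero
  eq_ne : ∀ u v : U, u ≠ v → ι σ.eqr (pair u v) = TV.zero

/-- A 2-valued logical structure over `σ`: all predicate values are definite and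
the equality symbol is interpreted as true equality. -/
structure Str2 (σ : Voc) : Type 1 where
  U : Type
  ι : (r : σ.rel) → (Fin (σ.ar r) → U) → Bool
  eq_iff : ∀ u v : U, ι σ.eqr (pair u v) = true ↔ u = v

/-- The value of a predicate of a 2-valued structure, seen as a truth value. -/
def Str2.tv {σ : Voc} (C : Str2 σ) (r : σ.rel) (t : Fin (σ.ar r) → C.U) : TV :=
  if C.ι r t then TV.one else TV.zero

/-- `f` embeds the 2-valued structure `C` into the 3-valued structure `S`:
`f` is surjective and every predicate value of `C` is ⊑ the corresponding
value of `S`. -/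
def Embeds {σ : Voc} (C : Str2 σ) (S : Str3 σ) (f : C.U → S.U) : Prop :=
  Function.Surjective f ∧
    ∀ (r : σ.rel) (t : Fin (σ.ar r) → C.U), TV.le (C.tv r t) (S.ι r (f ∘ t))

/-- First-order formulas with transitive closure over vocabulary `σ`, with
free variables drawn from `V`. -/
inductive Fml (σ : Voc) : Type → Type 1 where
  | tru {V : Type} : Fml σ V
  | atom {V : Type} (r : σ.rel) (ts : Fin (σ.ar r) → V) : Fml σ V
  | not {V : Type} : Fml σ V → Fml σ V
  | or {V : Type} : Fml σ V → Fml σ V → Fml σ V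
  | ex {V : Type} : Fml σ (Option V) → Fml σ V
  | tc {V : Type} (φ : Fml σ (Option (Option V))) (a b : V) : Fml σ V

/-- Tarskian satisfaction of a formula in a 2-valued structure under an
assignment `ρ` of the free variables. -/
def Str2.Sat {σ : Voc} (C : Str2 σ) : {V : Type} → (V → C.U) → Fml σ V → Prop
  | _, _, .tru => True
  | _, ρ, .atom r ts => C.ι r (ρ ∘ ts) = true
  | _, ρ, .not φ => ¬ C.Sat ρ φ
  | _, ρ, .or φ ψ => C.Sat ρ φ ∨ C.Sat ρ ψ
  | _, ρ, .ex φ => ∃ m : C.U, C.Sat (fun v => Option.elim v m ρ) φ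
  | _, ρ, .tc φ a b =>
      Relation.TransGen
        (fun x y => C.Sat (fun v => Option.elim v y (fun v' => Option.elim v' x ρ)) φ)
        (ρ a) (ρ b)

/-- Satisfaction of a closed formula. -/
def SatC {σ : Voc} (C : Str2 σ) (φ : Fml σ Empty) : Prop :=
  C.Sat (fun x => x.elim) φ

namespace Fml

def fls {σ : Voc} {V : Type} : Fml σ V := .not .tru

def and {σ : Voc} {V : Type} (φ ψ : Fml σ V) : Fml σ V := .not (.or (.not φ) (.not ψ))

def imp {σ : Voc} {V : Type} (φ ψ : Fml σ V) : Fml σ V := .or (.not φ) ψ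

def all {σ : Voc} {V : Type} (φ : Fml σ (Option V)) : Fml σ V := .not (.ex (.not φ))

def conj {σ : Voc} {V : Type} (l : List (Fml σ V)) : Fml σ V := l.foldr .and .tru

def disj {σ : Voc} {V : Type} (l : List (Fml σ V)) : Fml σ V := l.foldr .or .fls

/-- Renaming of free variables. -/
def map {σ : Voc} : {V W : Type} → (V → W) → Fml σ V → Fml σ W
  | _, _, _, .tru => .tru
  | _, _, g, .atom r ts => .atom r (g ∘ ts)
  | _, _, g, .not φ => .not (φ.map g)
  | _, _, g, .or φ ψ => .or (φ.map g) (ψ.map g)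
  | _, _, g, .ex φ => .ex (φ.map (Option.map g))
  | _, _, g, .tc φ a b => .tc (φ.map (Option.map (Option.map g))) (g a) (g b)

end Fml

/-- The characteristic formula `p^B` of the truth value `B` for the predicate `p`:
`p^0 := ¬p`, `p^1 := p`, `p^{1/2} := true`. -/
def charFml {σ : Voc} {V : Type} (p : σ.rel) (ts : Fin (σ.ar p) → V) : TV → Fml σ V
  | TV.zero => .not (.atom p ts)
  | TV.one => .atom p ts
  | TV.half => .tru

/-- `node` is a family of node formulas (one per node of `S`, with a single free
variable `w`) witnessing that `S` is FO-identifiable: for every 2-valued `C`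
embedding into `S` via `f` and every concrete node `uh`, `f uh = u` iff `C`
satisfies `node u` under `[w ↦ uh]`. -/
def IsNodeFamily {σ : Voc} (S : Str3 σ) (node : S.U → Fml σ Unit) : Prop :=
  ∀ (C : Str2 σ) (f : C.U → S.U), Embeds C S f →
    ∀ (uh : C.U) (u : S.U), f uh = u ↔ C.Sat (fun _ => uh) (node u)

/-- `S` is FO-identifiable. -/
def FOIdentifiable {σ : Voc} (S : Str3 σ) : Prop :=
  ∃ node : S.U → Fml σ Unit, IsNodeFamily S node

/-- Mutual exclusivity of a family of node formulas: in every 2-valued structure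
that embeds into `S`, every concrete node satisfies at most one node formula. -/
def MutExcl {σ : Voc} (S : Str3 σ) (node : S.U → Fml σ Unit) : Prop :=
  ∀ C : Str2 σ, (∃ f : C.U → S.U, Embeds C S f) →
    ∀ (uh : C.U) (u1 u2 : S.U), u1 ≠ u2 →
      ¬ (C.Sat (fun _ => uh) (node u1) ∧ C.Sat (fun _ => uh) (node u2))

/-- `S` is a bounded structure: any two distinct nodes are distinguished by a
unary predicate having distinct definite values on them. -/
def Bounded {σ : Voc} (S : Str3 σ) : Prop :=
  ∀ u1 u2 : S.U, u1 ≠ u2 →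
    ∃ p : σ.rel, σ.ar p = 1 ∧
      S.ι p (fun _ => u1) ≠ S.ι p (fun _ => u2) ∧
      S.ι p (fun _ => u1) ≠ TV.half ∧ S.ι p (fun _ => u2) ≠ TV.half

/-- The node formula `node^S_u(w) := ⋀_{p unary} p^{ι^S(p)(u)}(w)`. -/
noncomputable def boundedNode {σ : Voc} [Fintype σ.rel] (S : Str3 σ) (u : S.U) : Fml σ Unit :=
  Fml.conj
    (((Finset.univ : Finset {p : σ.rel // σ.ar p = 1}).toList).map
      (fun p => charFml p.1 (fun _ => ()) (S.ι p.1 (fun _ => u))))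

/-- The conjunction `⋀_j node_{t j}(w_j)` over the components of a tuple of
abstract nodes, as a formula with free variables `w_1, …, w_n`. -/
def nodeTuple {σ : Voc} (S : Str3 σ) (node : S.U → Fml σ Unit) {n : ℕ}
    (t : Fin n → S.U) : Fml σ (Fin n) :=
  Fml.conj (List.ofFn fun j : Fin n => (node (t j)).map (fun _ => j))

/-- Universal closure of a formula with `n` free variables. -/
def closeAll {σ : Voc} : {n : ℕ} → Fml σ (Fin n) → Fml σ Empty
  | 0, φ => φ.map Fin.elim0
  | _ + 1, φ =>
      closeAll (Fml.all (φ.map (fun i => Fin.lastCases none (fun j => some j) i)))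

/-- Existential closure of a formula with `n` free variables. -/
def closeEx {σ : Voc} : {n : ℕ} → Fml σ (Fin n) → Fml σ Empty
  | 0, φ => φ.map Fin.elim0
  | _ + 1, φ =>
      closeEx (Fml.ex (φ.map (fun i => Fin.lastCases none (fun j => some j) i)))

/-- `∃ v : node_u(v)`. -/
noncomputable def existsNode {σ : Voc} (S : Str3 σ) (node : S.U → Fml σ Unit) (u : S.U) :
    Fml σ Empty :=
  .ex ((node u).map (fun _ => (none : Option Empty)))

/-- The totality formula `∀ w : ⋁_i node_{u_i}(w)`. -/
noncomputable def xiTotal {σ : Voc} (S : Str3 σ) [Fintype S.U] (node : S.U → Fml σ Unit) :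
    Fml σ Empty :=
  Fml.all (Fml.disj
    (((Finset.univ : Finset S.U).toList).map
      (fun u => (node u).map (fun _ => (none : Option Empty)))))

/-- The nullary characteristic formula `⋀_{p nullary} p^{ι^S(p)()}`. -/
noncomputable def xiNullary {σ : Voc} [Fintype σ.rel] (S : Str3 σ) : Fml σ Empty :=
  Fml.conj
    (((Finset.univ : Finset σ.rel).toList).map (fun p =>
      if h : σ.ar p = 0 then
        charFml p (fun i => Fin.elim0 (Fin.cast h i))
          (S.ι p (fun i => Fin.elim0 (Fin.cast h i)))
      else .tru))

/-- The predicate characteristic formula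
`∀ w1 … wr : ⋀_{tuples ū} ((⋀_j node_{ū j}(w_j)) → p^{ι^S(p)(ū)}(w̄))`. -/
noncomputable def xiPred {σ : Voc} (S : Str3 σ) [Fintype S.U] (node : S.U → Fml σ Unit)
    (p : σ.rel) : Fml σ Empty :=
  closeAll (Fml.conj
    (((Finset.univ : Finset (Fin (σ.ar p) → S.U)).toList).map
      (fun t => Fml.imp (nodeTuple S node t)
        (charFml p (fun j => j) (S.ι p t)))))

/-- Conjunction of the predicate characteristic formulas over all predicates of
arity ≥ 1. -/
noncomputable def xiPredAll {σ : Voc} [Fintype σ.rel] (S : Str3 σ) [Fintype S.U]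
    (node : S.U → Fml σ Unit) : Fml σ Empty :=
  Fml.conj
    (((Finset.univ : Finset σ.rel).toList).map (fun p =>
      if σ.ar p = 0 then .tru else xiPred S node p))

/-- The first-order characteristic formula `ξ^S` of `S` (w.r.t. the node
formulas `node`). -/
noncomputable def xi {σ : Voc} [Fintype σ.rel] (S : Str3 σ) [Fintype S.U]
    (node : S.U → Fml σ Unit) : Fml σ Empty :=
  (Fml.conj (((Finset.univ : Finset S.U).toList).map (existsNode S node))).and
    ((xiTotal S node).and ((xiNullary S).and (xiPredAll S node)))

/-- The concretization `γ(S)`: the 2-valued structures that embed into `S` and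
satisfy the integrity formula `F`. -/
def gammaSet {σ : Voc} (F : Fml σ Empty) (S : Str3 σ) : Set (Str2 σ) :=
  {C | (∃ f : C.U → S.U, Embeds C S f) ∧ SatC C F}

/-- `S` is the canonical abstraction of the 2-valued structure `C` via `blur`:
`blur` is a surjective embedding that identifies exactly the concrete nodes with
equal canonical names (the values of the unary predicates), and every abstract
predicate value is the join of the concrete values it represents. -/
def IsCanonAbs {σ : Voc} (C : Str2 σ) (S : Str3 σ) (blur : C.U → S.U) : Prop :=
  Embeds C S blur ∧
    (∀ u v : C.U, blur u = blur v ↔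
      ∀ p : σ.rel, σ.ar p = 1 → C.ι p (fun _ => u) = C.ι p (fun _ => v)) ∧
    ∀ (p : σ.rel) (t' : Fin (σ.ar p) → S.U),
      TV.IsJoin {b | ∃ t : Fin (σ.ar p) → C.U, blur ∘ t = t' ∧ C.tv p t = b}
        (S.ι p t')

/-- `S` is an image of canonical abstraction. -/
def ICA {σ : Voc} (S : Str3 σ) : Prop :=
  ∃ (C : Str2 σ) (blur : C.U → S.U), IsCanonAbs C S blur

/-- The concretization of `S` under canonical abstraction. -/
def gammaC {σ : Voc} (F : Fml σ Empty) (S : Str3 σ) : Set (Str2 σ) :=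
  {C | (∃ blur : C.U → S.U, IsCanonAbs C S blur) ∧ SatC C F}

/-- `node` is a family of node formulas witnessing canonical-FO-identifiability
of `S`. -/
def IsCanonNodeFamily {σ : Voc} (S : Str3 σ) (node : S.U → Fml σ Unit) : Prop :=
  ∀ (C : Str2 σ) (blur : C.U → S.U), IsCanonAbs C S blur →
    ∀ (uh : C.U) (u : S.U), blur uh = u ↔ C.Sat (fun _ => uh) (node u)

/-- `τ^S[p]`: for every tuple where `p` has value 1/2, there are concrete
tuples (satisfying the node formulas) on which `p` holds, resp., fails. -/
noncomputable def tauPred {σ : Voc} (S : Str3 σ) [Fintype S.U] (node : S.U → Fml σ Unit)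
    (p : σ.rel) : Fml σ Empty :=
  Fml.conj
    (((((Finset.univ : Finset (Fin (σ.ar p) → S.U)).toList).filter
        (fun t => decide (S.ι p t = TV.half))).map
      (fun t =>
        (closeEx ((nodeTuple S node t).and (.atom p (fun j => j)))).and
          (closeEx ((nodeTuple S node t).and (.not (.atom p (fun j => j))))))))

/-- `τ^S := ξ^S ∧ ⋀_{p of arity ≥ 2} τ^S[p]`. -/
noncomputable def tau {σ : Voc} [Fintype σ.rel] (S : Str3 σ) [Fintype S.U]
    (node : S.U → Fml σ Unit) : Fml σ Empty :=
  (xi S node).and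
    (Fml.conj (((Finset.univ : Finset σ.rel).toList).map (fun p =>
      if 2 ≤ σ.ar p then tauPred S node p else .tru)))

/-- Isomorphism of 3-valued structures. -/
def Iso3 {σ : Voc} (S1 S2 : Str3 σ) : Prop :=
  ∃ e : S1.U ≃ S2.U,
    ∀ (p : σ.rel) (t : Fin (σ.ar p) → S1.U), S1.ι p t = S2.ι p (e ∘ t)

/-- Satisfaction of the NP (existential monadic second-order) characteristic
formula `ψ^S` of `S` in the 2-valued structure `C`: there exist sets `V_u`
(one per node `u` of `S`) that are nonempty, pairwise disjoint, and cover `C`,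
such that the nullary and the predicate characteristic conjuncts hold with
`node_{u}(w) := w ∈ V_u`. -/
def SatNP {σ : Voc} (S : Str3 σ) (C : Str2 σ) : Prop :=
  ∃ V : S.U → Set C.U,
    (∀ u : S.U, ∃ w, w ∈ V u) ∧
    (∀ u1 u2 : S.U, u1 ≠ u2 →
      ∀ w1 ∈ V u1, ∀ w2 ∈ V u2, ¬ C.ι σ.eqr (pair w1 w2) = true) ∧
    (∀ w : C.U, ∃ u : S.U, w ∈ V u) ∧
    (∀ (p : σ.rel) (h : σ.ar p = 0),
      TV.le (C.tv p (fun i => Fin.elim0 (Fin.cast h i)))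
        (S.ι p (fun i => Fin.elim0 (Fin.cast h i)))) ∧
    (∀ (p : σ.rel), 1 ≤ σ.ar p →
      ∀ (t : Fin (σ.ar p) → C.U) (us : Fin (σ.ar p) → S.U),
        (∀ j, t j ∈ V (us j)) → TV.le (C.tv p t) (S.ι p us))


/-! ### Auxiliary semantic lemmas -/

theorem TV.le_half' (a : TV) : TV.le a TV.half := Or.inr rfl

theorem TV.le_of_ne_half {a b : TV} (hb : b ≠ TV.half) (h : TV.le a b) : a = b := by
  rcases h with h | h
  · exact h
  · exact absurd h hb

theorem Str2.tv_ne_half {σ : Voc} (C : Str2 σ) (r : σ.rel) (t : Fin (σ.ar r) → C.U) :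
    C.tv r t ≠ TV.half := by
  unfold Str2.tv; split <;> simp

theorem sat_and {σ : Voc} (C : Str2 σ) {V : Type} (ρ : V → C.U) (φ ψ : Fml σ V) :
    C.Sat ρ (φ.and ψ) ↔ C.Sat ρ φ ∧ C.Sat ρ ψ := by
  simp only [Fml.and, Str2.Sat]
  tauto

theorem sat_conj {σ : Voc} (C : Str2 σ) {V : Type} (ρ : V → C.U) (l : List (Fml σ V)) :
    C.Sat ρ (Fml.conj l) ↔ ∀ φ ∈ l, C.Sat ρ φ := by
  induction l with
  | nil => simp [Fml.conj, Str2.Sat]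
  | cons a l ih =>
    simp only [Fml.conj, List.foldr_cons] at *
    rw [show (List.foldr Fml.and Fml.tru l) = Fml.conj l from rfl] at *
    rw [sat_and, ih]
    simp

theorem sat_disj {σ : Voc} (C : Str2 σ) {V : Type} (ρ : V → C.U) (l : List (Fml σ V)) :
    C.Sat ρ (Fml.disj l) ↔ ∃ φ ∈ l, C.Sat ρ φ := by
  induction l with
  | nil => simp [Fml.disj, Fml.fls, Str2.Sat]
  | cons a l ih =>
    simp only [Fml.disj, List.foldr_cons] at *
    rw [show (List.foldr Fml.or Fml.fls l) = Fml.disj l from rfl] at *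
    rw [show (C.Sat ρ (Fml.or a (Fml.disj l))) = (C.Sat ρ a ∨ C.Sat ρ (Fml.disj l)) from rfl,
      ih]
    simp

theorem sat_all {σ : Voc} (C : Str2 σ) {V : Type} (ρ : V → C.U) (φ : Fml σ (Option V)) :
    C.Sat ρ (Fml.all φ) ↔ ∀ m : C.U, C.Sat (fun v => Option.elim v m ρ) φ := by
  simp only [Fml.all, Str2.Sat]
  push_neg
  simp [not_not]

theorem sat_map {σ : Voc} (C : Str2 σ) :
    ∀ {V : Type} (φ : Fml σ V) {W : Type} (g : V → W) (ρ : W → C.U),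
      C.Sat ρ (φ.map g) ↔ C.Sat (ρ ∘ g) φ
  | _, .tru, _, _, _ => Iff.rfl
  | _, .atom r ts, _, g, ρ => by
      simp only [Fml.map, Str2.Sat, Function.comp_assoc]
  | _, .not φ, _, g, ρ => by
      simp only [Fml.map, Str2.Sat, sat_map C φ g ρ]
  | _, .or φ ψ, _, g, ρ => by
      simp only [Fml.map, Str2.Sat, sat_map C φ g ρ, sat_map C ψ g ρ]
  | _, .ex φ, _, g, ρ => by
      simp only [Fml.map, Str2.Sat]
      have key : ∀ m : C.U, ((fun v => Option.elim v m ρ) ∘ Option.map g)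
          = (fun v => Option.elim v m (ρ ∘ g)) := by
        intro m
        funext v
        cases v <;> rfl
      constructor
      · rintro ⟨m, hm⟩
        rw [sat_map C φ (Option.map g), key] at hm
        exact ⟨m, hm⟩
      · rintro ⟨m, hm⟩
        refine ⟨m, ?_⟩
        rw [sat_map C φ (Option.map g), key]
        exact hm
  | _, .tc φ a b, _, g, ρ => by
      simp only [Fml.map, Str2.Sat]
      have hrel : (fun x y => C.Sat
            (fun v => Option.elim v y (fun v' => Option.elim v' x ρ))
            (φ.map (Option.map (Option.map g))))
          = (fun x y => C.Sat
            (fun v => Option.elim v y (fun v' => Option.elim v' x (ρ ∘ g))) φ) := by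
        funext x y
        rw [sat_map C φ (Option.map (Option.map g))]
        apply propext
        apply iff_of_eq
        congr 1
        funext v
        cases v with
        | none => rfl
        | some v' => cases v' <;> rfl
      rw [hrel]
      exact Iff.rfl

theorem snoc_key {σ : Voc} (C : Str2 σ) {n : ℕ} (ρn : Fin n → C.U) (m : C.U) :
    ((fun v => Option.elim v m ρn) ∘
        (fun i : Fin (n + 1) => Fin.lastCases none (fun j => some j) i))
      = Fin.snoc ρn m := by
  funext i
  induction i using Fin.lastCases with
  | last => simp [Function.comp]
  | cast j => simp [Function.comp]

theorem sat_closeAll {σ : Voc} (C : Str2 σ) :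
    ∀ {n : ℕ} (φ : Fml σ (Fin n)),
      SatC C (closeAll φ) ↔ ∀ ρ : Fin n → C.U, C.Sat ρ φ := by
  intro n
  induction n with
  | zero =>
    intro φ
    show C.Sat _ (φ.map _) ↔ _
    rw [sat_map]
    constructor
    · intro h ρ
      have e : ((fun x : Empty => x.elim) ∘ Fin.elim0 : Fin 0 → C.U) = ρ := by
        funext i; exact i.elim0
      rw [← e]
      exact h
    · intro h
      exact h _
  | succ n ih =>
    intro φ
    show SatC C (closeAll (Fml.all (φ.map _))) ↔ _
    rw [ih]
    constructor
    · intro h ρ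
      have h2 := (sat_all C _ _).mp (h (ρ ∘ Fin.castSucc)) (ρ (Fin.last n))
      rw [sat_map, snoc_key] at h2
      have e : Fin.snoc (ρ ∘ Fin.castSucc) (ρ (Fin.last n)) = ρ := Fin.snoc_init_self ρ
      rwa [e] at h2
    · intro h ρn
      rw [sat_all]
      intro m
      rw [sat_map, snoc_key]
      exact h _

theorem sat_closeEx {σ : Voc} (C : Str2 σ) :
    ∀ {n : ℕ} (φ : Fml σ (Fin n)),
      SatC C (closeEx φ) ↔ ∃ ρ : Fin n → C.U, C.Sat ρ φ := by
  intro n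
  induction n with
  | zero =>
    intro φ
    show C.Sat _ (φ.map _) ↔ _
    rw [sat_map]
    constructor
    · intro h
      exact ⟨_, h⟩
    · rintro ⟨ρ, hρ⟩
      have e : ((fun x : Empty => x.elim) ∘ Fin.elim0 : Fin 0 → C.U) = ρ := by
        funext i; exact i.elim0
      rw [e]
      exact hρ
  | succ n ih =>
    intro φ
    show SatC C (closeEx (Fml.ex (φ.map _))) ↔ _
    rw [ih]
    constructor
    · rintro ⟨ρn, m, hm⟩
      rw [sat_map, snoc_key] at hm
      exact ⟨_, hm⟩
    · rintro ⟨ρ, hρ⟩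
      refine ⟨ρ ∘ Fin.castSucc, ρ (Fin.last n), ?_⟩
      rw [sat_map, snoc_key]
      have e : Fin.snoc (ρ ∘ Fin.castSucc) (ρ (Fin.last n)) = ρ := Fin.snoc_init_self ρ
      rwa [e]

theorem sat_nodeTuple {σ : Voc} (C : Str2 σ) (S : Str3 σ) (node : S.U → Fml σ Unit)
    {n : ℕ} (t : Fin n → S.U) (ρ : Fin n → C.U) :
    C.Sat ρ (nodeTuple S node t) ↔ ∀ j, C.Sat (fun _ => ρ j) (node (t j)) := by
  rw [nodeTuple, sat_conj]
  constructor
  · intro h j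
    have := h _ (List.mem_ofFn.mpr ⟨j, rfl⟩)
    rw [sat_map] at this
    exact this
  · intro h φ hφ
    obtain ⟨j, rfl⟩ := List.mem_ofFn.mp hφ
    rw [sat_map]
    exact h j

theorem bool_eq_of_iff {a b : Bool} (h : (a = true) ↔ (b = true)) : a = b := by
  cases a <;> cases b <;> simp_all

theorem join_definite {A : Set TV} {v b : TV} (hb : b ∈ A) (hA : ∀ a ∈ A, a = b)
    (hbd : b ≠ TV.half) (h : TV.IsJoin A v) : v = b := by
  have h2 := h.2 b (fun a ha => (hA a ha) ▸ Or.inl rfl)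
  exact TV.le_of_ne_half hbd h2

/-- for an ICA structure `S` whose node formulas are arbitrary
formulas satisfying the mutual-exclusivity property, every 2-valued structure
satisfying `γ̂_c(S) = F ∧ τ^S` has `S` as its canonical abstraction. -/
theorem sat_gammaHatC_canonAbs {σ : Voc} [Fintype σ.rel] (F : Fml σ Empty)
    (S : Str3 σ) [Fintype S.U] (hICA : ICA S)
    (node : S.U → Fml σ Unit) (hmut : MutExcl S node)
    (C : Str2 σ) (h : SatC C (F.and (tau S node))) :
    ∃ blur : C.U → S.U, IsCanonAbs C S blur := by
  classical
  obtain ⟨C0, blur0, emb0, hname, hjoin⟩ := hICA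
  have tv_ne_half : ∀ (D : Str2 σ) (r : σ.rel) (t : Fin (σ.ar r) → D.U),
      D.tv r t ≠ TV.half := fun D r t => D.tv_ne_half r t
  -- value of unary predicates of S on classes
  have hS1val : ∀ p, σ.ar p = 1 → ∀ w : C0.U,
      S.ι p (fun _ => blur0 w) = C0.tv p (fun _ => w) := by
    intro p hp w
    refine join_definite ?_ ?_ (tv_ne_half C0 p _) (hjoin p _)
    · refine ⟨fun _ => w, ?_, rfl⟩
      rfl
    · rintro a ⟨t, ht, rfl⟩
      have j0 : Fin (σ.ar p) := ⟨0, by omega⟩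
      have hsub : ∀ i : Fin (σ.ar p), i = j0 := by
        intro i; apply Fin.ext; omega
      have hb : blur0 (t j0) = blur0 w := congrFun ht j0
      have hq := (hname (t j0) w).mp hb p hp
      have hteq : t = fun _ => t j0 := by funext i; rw [hsub i]
      rw [hteq]
      simp [Str2.tv, hq]
  -- unary predicates of S are definite
  have hS1 : ∀ p, σ.ar p = 1 → ∀ t' : Fin (σ.ar p) → S.U, S.ι p t' ≠ TV.half := by
    intro p hp t'
    have j0 : Fin (σ.ar p) := ⟨0, by omega⟩
    have hsub : ∀ i : Fin (σ.ar p), i = j0 := by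
      intro i; apply Fin.ext; omega
    obtain ⟨w, hw⟩ := emb0.1 (t' j0)
    have hteq : t' = fun _ => blur0 w := by
      funext i; rw [hsub i, hw]
    rw [hteq, hS1val p hp w]
    exact tv_ne_half C0 p _
  -- nullary predicates of S are definite
  have hS0 : ∀ p, σ.ar p = 0 → ∀ t' : Fin (σ.ar p) → S.U, S.ι p t' ≠ TV.half := by
    intro p hp t'
    have t0 : Fin (σ.ar p) → C0.U := fun i => absurd i.isLt (by omega)
    have hval : S.ι p t' = C0.tv p t0 := by
      refine join_definite ?_ ?_ (tv_ne_half C0 p _) (hjoin p _)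
      · refine ⟨t0, ?_, rfl⟩
        funext i; exact absurd i.isLt (by omega)
      · rintro a ⟨t, ht, rfl⟩
        have : t = t0 := by funext i; exact absurd i.isLt (by omega)
        rw [this]
    rw [hval]
    exact tv_ne_half C0 p _
  -- distinct abstract nodes are separated by a unary predicate
  have hsep : ∀ u1 u2 : S.U, u1 ≠ u2 →
      ∃ p, σ.ar p = 1 ∧ S.ι p (fun _ => u1) ≠ S.ι p (fun _ => u2) := by
    intro u1 u2 hne
    obtain ⟨w1, hw1⟩ := emb0.1 u1
    obtain ⟨w2, hw2⟩ := emb0.1 u2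
    have hnall : ¬ ∀ p, σ.ar p = 1 → C0.ι p (fun _ => w1) = C0.ι p (fun _ => w2) := by
      intro hall
      apply hne
      rw [← hw1, ← hw2]
      exact (hname w1 w2).mpr hall
    push_neg at hnall
    obtain ⟨p, hp1, hpne⟩ := hnall
    refine ⟨p, hp1, ?_⟩
    rw [← hw1, ← hw2, hS1val p hp1 w1, hS1val p hp1 w2]
    intro heq
    apply hpne
    unfold Str2.tv at heq
    cases hb1 : C0.ι p (fun _ => w1) <;> cases hb2 : C0.ι p (fun _ => w2) <;>
      simp_all
  -- unpack the hypothesis h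
  have h' : C.Sat (fun x : Empty => x.elim) (F.and (tau S node)) := h
  rw [sat_and] at h'
  obtain ⟨hF, htau0⟩ := h'
  rw [tau, sat_and] at htau0
  obtain ⟨hxi0, htaus⟩ := htau0
  rw [xi, sat_and] at hxi0
  obtain ⟨hexistsC, hrest⟩ := hxi0
  rw [sat_and] at hrest
  obtain ⟨htotalC, hrest2⟩ := hrest
  rw [sat_and] at hrest2
  obtain ⟨hnullC, hpredAll⟩ := hrest2
  -- usable forms of the conjuncts
  have hexists : ∀ u : S.U, ∃ w : C.U, C.Sat (fun _ => w) (node u) := by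
    intro u
    have hx := (sat_conj C _ _).mp hexistsC _
      (List.mem_map_of_mem (Finset.mem_toList.mpr (Finset.mem_univ u)))
    rw [existsNode] at hx
    simp only [Str2.Sat] at hx
    obtain ⟨m, hm⟩ := hx
    rw [sat_map] at hm
    exact ⟨m, hm⟩
  have htotal : ∀ w : C.U, ∃ u : S.U, C.Sat (fun _ => w) (node u) := by
    intro w
    rw [xiTotal, sat_all] at htotalC
    have hx := htotalC w
    rw [sat_disj] at hx
    obtain ⟨φ, hφmem, hφ⟩ := hx
    obtain ⟨u, _, rfl⟩ := List.mem_map.mp hφmem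
    rw [sat_map] at hφ
    exact ⟨u, hφ⟩
  have hpred : ∀ p, σ.ar p ≠ 0 → ∀ (t : Fin (σ.ar p) → S.U) (ρ : Fin (σ.ar p) → C.U),
      (∀ j, C.Sat (fun _ => ρ j) (node (t j))) →
      C.Sat ρ (charFml p (fun j => j) (S.ι p t)) := by
    intro p hp t ρ hnt
    have hx := (sat_conj C _ _).mp hpredAll _
      (List.mem_map_of_mem (Finset.mem_toList.mpr (Finset.mem_univ p)))
    rw [if_neg hp] at hx
    rw [xiPred] at hx
    replace hx := (sat_closeAll C _).mp hx
    have h2 := (sat_conj C _ _).mp (hx ρ) _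
      (List.mem_map_of_mem (Finset.mem_toList.mpr (Finset.mem_univ t)))
    simp only [Fml.imp, Str2.Sat] at h2
    rcases h2 with h2 | h2
    · exact absurd ((sat_nodeTuple C S node t ρ).mpr hnt) h2
    · exact h2
  have hnull : ∀ p (h0 : σ.ar p = 0),
      C.Sat (fun x : Empty => x.elim)
        (charFml p (fun i => Fin.elim0 (Fin.cast h0 i))
          (S.ι p (fun i => Fin.elim0 (Fin.cast h0 i)))) := by
    intro p h0
    have hx := (sat_conj C _ _).mp hnullC _
      (List.mem_map_of_mem (Finset.mem_toList.mpr (Finset.mem_univ p)))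
    rw [dif_pos h0] at hx
    exact hx
  have htauHalf : ∀ p, 2 ≤ σ.ar p → ∀ t : Fin (σ.ar p) → S.U, S.ι p t = TV.half →
      (∃ ρ, C.Sat ρ ((nodeTuple S node t).and (.atom p (fun j => j)))) ∧
      (∃ ρ, C.Sat ρ ((nodeTuple S node t).and (.not (.atom p (fun j => j))))) := by
    intro p hp t ht
    have hx := (sat_conj C _ _).mp htaus _
      (List.mem_map_of_mem (Finset.mem_toList.mpr (Finset.mem_univ p)))
    rw [if_pos hp] at hx
    rw [tauPred] at hx
    have hmem : t ∈ (Finset.univ.toList).filter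
        (fun t => decide (S.ι p t = TV.half)) :=
      List.mem_filter.mpr ⟨Finset.mem_toList.mpr (Finset.mem_univ t), by simp [ht]⟩
    have h2 := (sat_conj C _ _).mp hx _ (List.mem_map_of_mem hmem)
    rw [sat_and] at h2
    obtain ⟨ha, hb⟩ := h2
    exact ⟨(sat_closeEx C _).mp ha, (sat_closeEx C _).mp hb⟩
  -- mutual exclusivity within C (derived from the eq-conjunct of ξ)
  have huniq0 : ∀ (w : C.U) (u1 u2 : S.U), C.Sat (fun _ => w) (node u1) →
      C.Sat (fun _ => w) (node u2) → u1 = u2 := by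
    intro w u1 u2 h1 h2
    by_contra hne
    have heqz : S.ι σ.eqr (pair u1 u2) = TV.zero := S.eq_ne u1 u2 hne
    have hne0 : σ.ar σ.eqr ≠ 0 := by rw [σ.eq_ar]; omega
    have hcf := hpred σ.eqr hne0 (pair u1 u2) (pair w w) ?_
    · rw [heqz] at hcf
      simp only [charFml, Str2.Sat] at hcf
      exact hcf ((C.eq_iff w w).mpr rfl)
    · intro j
      by_cases hj : (j : ℕ) = 0
      · simpa [pair, hj] using h1
      · simpa [pair, hj] using h2
  -- define the blurring function
  choose blurF hblurF using htotal
  have huniq : ∀ w u, C.Sat (fun _ => w) (node u) → blurF w = u :=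
    fun w u hu => huniq0 w _ _ (hblurF w) hu
  have hsurj : Function.Surjective blurF := by
    intro u
    obtain ⟨w, hw⟩ := hexists u
    exact ⟨w, huniq w u hw⟩
  have hembval : ∀ (r : σ.rel) (t : Fin (σ.ar r) → C.U),
      TV.le (C.tv r t) (S.ι r (blurF ∘ t)) := by
    intro r t
    by_cases hhalf : S.ι r (blurF ∘ t) = TV.half
    · rw [hhalf]; exact TV.le_half' _
    by_cases h0 : σ.ar r = 0
    · have hempty : ∀ {α : Type} (f g : Fin (σ.ar r) → α), f = g := by
        intro α f g; funext i; exact absurd i.isLt (by omega)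
      have hx := hnull r h0
      have he1 : (blurF ∘ t) = (fun i => Fin.elim0 (Fin.cast h0 i)) := hempty _ _
      rw [he1]
      rw [he1] at hhalf
      cases hv : S.ι r (fun i => Fin.elim0 (Fin.cast h0 i)) with
      | half => exact absurd hv hhalf
      | one =>
        rw [hv] at hx
        simp only [charFml, Str2.Sat] at hx
        left
        rw [hempty t ((fun x : Empty => x.elim) ∘ (fun i => Fin.elim0 (Fin.cast h0 i)))]
        simp [Str2.tv, hx]
      | zero =>
        rw [hv] at hx
        simp only [charFml, Str2.Sat] at hx
        simp only [Bool.not_eq_true] at hx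
        left
        rw [hempty t ((fun x : Empty => x.elim) ∘ (fun i => Fin.elim0 (Fin.cast h0 i)))]
        simp [Str2.tv, hx]
    · have hcf := hpred r h0 (blurF ∘ t) t (fun j => hblurF (t j))
      cases hv : S.ι r (blurF ∘ t) with
      | half => exact absurd hv hhalf
      | one =>
        rw [hv] at hcf
        simp only [charFml, Str2.Sat] at hcf
        left
        have hcf' : C.ι r t = true := hcf
        simp [Str2.tv, hcf']
      | zero =>
        rw [hv] at hcf
        simp only [charFml, Str2.Sat] at hcf
        left
        have hcf' : C.ι r t = false := by simpa [Function.comp_def] using hcf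
        simp [Str2.tv, hcf']
  -- unary values of C are determined by S
  have hunary : ∀ p, σ.ar p = 1 → ∀ w : C.U,
      (C.ι p (fun _ => w) = true ↔ S.ι p (fun _ => blurF w) = TV.one) := by
    intro p hp w
    have hne0 : σ.ar p ≠ 0 := by omega
    have hcf := hpred p hne0 (fun _ => blurF w) (fun _ => w) (fun j => hblurF w)
    have hnh := hS1 p hp (fun _ => blurF w)
    cases hv : S.ι p (fun _ => blurF w) with
    | half => exact absurd hv hnh
    | one =>
      rw [hv] at hcf
      simp only [charFml, Str2.Sat] at hcf
      have hcf' : C.ι p (fun _ => w) = true := hcf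
      simp [hcf']
    | zero =>
      rw [hv] at hcf
      simp only [charFml, Str2.Sat] at hcf
      simp only [Bool.not_eq_true] at hcf
      have hcf' : C.ι p (fun _ => w) = false := hcf
      simp [hcf']
  refine ⟨blurF, ⟨hsurj, hembval⟩, ?_, ?_⟩
  · -- canonical-name condition
    intro u v
    constructor
    · intro hbe p hp
      have h1 := hunary p hp u
      have h2 := hunary p hp v
      rw [hbe] at h1
      exact bool_eq_of_iff (h1.trans h2.symm)
    · intro hall
      by_contra hne
      obtain ⟨p, hp, hpne⟩ := hsep (blurF u) (blurF v) hne
      apply hpne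
      have h1 := hunary p hp u
      have h2 := hunary p hp v
      have hnu := hS1 p hp (fun _ => blurF u)
      have hnv := hS1 p hp (fun _ => blurF v)
      have hiff : (S.ι p (fun _ => blurF u) = TV.one) ↔
          (S.ι p (fun _ => blurF v) = TV.one) := by
        rw [← h1, ← h2, hall p hp]
      cases hsu : S.ι p (fun _ => blurF u) with
      | half => exact absurd hsu hnu
      | one =>
        rw [hsu] at hiff
        exact (hiff.mp rfl).symm
      | zero =>
        rw [hsu] at hiff
        cases hsv : S.ι p (fun _ => blurF v) with
        | half => exact absurd hsv hnv
        | zero => rfl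
        | one =>
          rw [hsv] at hiff
          exact absurd (hiff.mpr rfl) (by decide)
  · -- join condition
    intro p t'
    by_cases hhalf : S.ι p t' = TV.half
    · rw [hhalf]
      have h2le : 2 ≤ σ.ar p := by
        rcases Nat.lt_or_ge (σ.ar p) 2 with hlt | hge
        · have : σ.ar p = 0 ∨ σ.ar p = 1 := by omega
          rcases this with h0 | h1
          · exact absurd hhalf (hS0 p h0 t')
          · exact absurd hhalf (hS1 p h1 t')
        · exact hge
      obtain ⟨⟨ρ1, hρ1⟩, ⟨ρ2, hρ2⟩⟩ := htauHalf p h2le t' hhalf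
      rw [sat_and] at hρ1 hρ2
      obtain ⟨hn1, ha1⟩ := hρ1
      obtain ⟨hn2, ha2⟩ := hρ2
      have m1 : TV.one ∈ {b | ∃ t, blurF ∘ t = t' ∧ C.tv p t = b} := by
        refine ⟨ρ1, funext fun j => huniq _ _ ((sat_nodeTuple C S node t' ρ1).mp hn1 j), ?_⟩
        simp only [Str2.Sat] at ha1
        have ha1' : C.ι p ρ1 = true := ha1
        simp [Str2.tv, ha1']
      have m0 : TV.zero ∈ {b | ∃ t, blurF ∘ t = t' ∧ C.tv p t = b} := by
        refine ⟨ρ2, funext fun j => huniq _ _ ((sat_nodeTuple C S node t' ρ2).mp hn2 j), ?_⟩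
        simp only [Str2.Sat] at ha2
        simp only [Bool.not_eq_true] at ha2
        have ha2' : C.ι p ρ2 = false := ha2
        simp [Str2.tv, ha2']
      constructor
      · intro a _
        exact TV.le_half' a
      · intro w hw
        have l1 : TV.le TV.one w := hw TV.one m1
        have l0 : TV.le TV.zero w := hw TV.zero m0
        have hweq : w = TV.half := by
          rcases l1 with h1 | h1
          · rcases l0 with h0 | h0
            · rw [← h1] at h0; cases h0
            · exact h0
          · exact h1
        rw [hweq]
        exact Or.inl rfl
    · -- definite value
      have hne : ∃ t : Fin (σ.ar p) → C.U, blurF ∘ t = t' :=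
        ⟨fun j => Classical.choose (hsurj (t' j)),
          funext fun j => Classical.choose_spec (hsurj (t' j))⟩
      obtain ⟨t0, ht0⟩ := hne
      constructor
      · rintro a ⟨t, ht, rfl⟩
        rw [← ht]
        exact hembval p t
      · intro w hw
        have ha : C.tv p t0 = S.ι p t' := by
          have hle := hembval p t0
          rw [ht0] at hle
          exact TV.le_of_ne_half hhalf hle
        rw [← ha]
        exact hw _ ⟨t0, ht0, rfl⟩
end HeapAbs
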